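/- Let ℏ ≠ 0, a, b, c, t ∈ ℂ with t ≠ 0, and m a nonnegative integer. The operator defined by t·H_V(Φ) = x(x−1)ℏ²Φ'' + (tx² − (b+c+t)x + b)ℏΦ' + a(b+c−a+ℏ+t−tx)Φ maps polynomials of degree ≤ m to polynomials of degree ≤ m if and only if a = mℏ. -/

import Mathlib

open Polynomial

/-- The quantized Painlevé V Hamiltonian acting on polynomials:
`t·H_V Φ = x(x−1)(ℏ d/dx)² Φ + (tx² − (b+c+t)x + b)(ℏ d/dx) Φ
  + a(b+c−a+ℏ+t−tx)·Φ`. -/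
noncomputable def HV (ℏ a b c t : ℂ) (Φ : ℂ[X]) : ℂ[X] :=
  C t⁻¹ *
    (X * (X - 1) * (ℏ ^ 2 • derivative (derivative Φ))
      + (C t * X ^ 2 - C (b + c + t) * X + C b) * (ℏ • derivative Φ)
      + (C (a * (b + c - a + ℏ + t)) - C (a * t) * X) * Φ)

lemma hv_coeff (ℏ a b c t : ℂ) (Φ : ℂ[X]) (n : ℕ) :
    (HV ℏ a b c t Φ).coeff (n + 2) =
      t⁻¹ * (ℏ^2*(n+1)*(n+2)*Φ.coeff (n+2) - ℏ^2*(n+2)*(n+3)*Φ.coeff (n+3)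
        + t*ℏ*(n+1)*Φ.coeff (n+1) - (b+c+t)*ℏ*(n+2)*Φ.coeff (n+2) + b*ℏ*(n+3)*Φ.coeff (n+3)
        + a*(b+c-a+ℏ+t)*Φ.coeff (n+2) - a*t*Φ.coeff (n+1)) := by
  have hx : ∀ (p : ℂ[X]) (d : ℕ), (X * p).coeff (d+2) = p.coeff (d+1) :=
    fun p d => coeff_X_mul p (d+1)
  unfold HV
  have h : (X * (X - 1) * (ℏ ^ 2 • derivative (derivative Φ))
      + (C t * X ^ 2 - C (b + c + t) * X + C b) * (ℏ • derivative Φ)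
      + (C (a * (b + c - a + ℏ + t)) - C (a * t) * X) * Φ)
    = X^2 * (ℏ ^ 2 • derivative (derivative Φ)) - X * (ℏ ^ 2 • derivative (derivative Φ))
      + (C t * (X^2 * (ℏ • derivative Φ)) - C (b+c+t) * (X * (ℏ • derivative Φ))
         + C b * (ℏ • derivative Φ))
      + (C (a * (b + c - a + ℏ + t)) * Φ - C (a*t) * (X * Φ)) := by ring
  rw [h]
  simp only [coeff_C_mul, coeff_add, coeff_sub, coeff_X_pow_mul, hx, coeff_smul,
    coeff_derivative, smul_eq_mul]
  push_cast
  ring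

/-- `H_V` preserves the space of polynomials of degree ≤ m iff `a = mℏ`. -/
theorem stmt4 (ℏ a b c t : ℂ) (hℏ : ℏ ≠ 0) (ht : t ≠ 0) (m : ℕ) :
    (∀ Φ : ℂ[X], Φ.degree ≤ m → (HV ℏ a b c t Φ).degree ≤ m) ↔ a = m * ℏ := by
  constructor
  · intro H
    cases m with
    | zero =>
      have h1 : (HV ℏ a b c t 1).degree ≤ (0 : ℕ) := H 1 (by simp)
      have hc : (HV ℏ a b c t 1).coeff 1 = t⁻¹ * (0 - a * t) := by
        unfold HV
        simp [coeff_C_mul, coeff_X, coeff_C]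
      have hz : (HV ℏ a b c t 1).coeff 1 = 0 :=
        coeff_eq_zero_of_degree_lt (lt_of_le_of_lt h1 (by norm_num))
      rw [hc] at hz
      field_simp at hz
      simp only [Nat.cast_zero, zero_mul]
      exact (mul_eq_zero.mp (by linear_combination -hz : a * t = 0)).resolve_right ht
    | succ m' =>
      have h1 : (HV ℏ a b c t (X^(m'+1))).degree ≤ ((m'+1 : ℕ) : WithBot ℕ) :=
        H (X^(m'+1)) (by simp)
      have hc := hv_coeff ℏ a b c t (X^(m'+1)) m'
      rw [coeff_X_pow, coeff_X_pow, coeff_X_pow, if_pos rfl, if_neg (by omega),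
        if_neg (by omega)] at hc
      have hz : (HV ℏ a b c t (X^(m'+1))).coeff (m'+2) = 0 :=
        coeff_eq_zero_of_degree_lt (lt_of_le_of_lt h1 (by exact_mod_cast Nat.lt_succ_self _))
      rw [hc] at hz
      field_simp at hz
      have h5 : t * (ℏ * (↑m' + 1) - a) = 0 := by linear_combination hz
      rcases mul_eq_zero.mp h5 with h | h
      · exact absurd h ht
      · push_cast
        linear_combination -h
  · intro ha Φ hΦ
    rw [degree_le_iff_coeff_zero]
    intro k hk
    have hk' : m < k := by exact_mod_cast hk
    match k, hk' with
    | 1, hk' =>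
      interval_cases m
      have hΦ' : Φ = C (Φ.coeff 0) := eq_C_of_degree_le_zero hΦ
      simp only [Nat.cast_zero, zero_mul] at ha
      rw [hΦ']
      unfold HV
      subst ha
      simp
    | (j+2), hk' =>
      have h2 : Φ.coeff (j+2) = 0 :=
        coeff_eq_zero_of_degree_lt (lt_of_le_of_lt hΦ (by exact_mod_cast by omega))
      have h3 : Φ.coeff (j+3) = 0 :=
        coeff_eq_zero_of_degree_lt (lt_of_le_of_lt hΦ (by exact_mod_cast by omega))
      rw [hv_coeff, h2, h3]
      by_cases hm : m = j + 1
      · subst hm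
        rw [ha]
        push_cast
        field_simp
        ring
      · have h4 : Φ.coeff (j+1) = 0 :=
          coeff_eq_zero_of_degree_lt (lt_of_le_of_lt hΦ (by exact_mod_cast by omega))
        rw [h4]
        ring
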